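/- arXiv:1602.08298 — 3 statements merged into one kernel-verified Lean document; each statement's English description precedes it below -/
import Mathlib

section
/- Let β : ℕ → ℝ be defined by log₂ β(11) = -log₂ 11 and log₂ β(i+1) = log₂(10/3) + k · log₂ β(i) for an integer k ≥ 2. Then for i* = 11 + log_k(log₂ n) (assuming log_k(log₂ n) is a positive integer), log₂ β(i*) = log₂(10/3) · (k^{log_k log₂ n} - 1)/(k - 1) - (log₂ n) · log₂ 11 ≤ (log₂ n) · (log₂(10/3) - log₂ 11) ≤ -1.7 · log₂ n. -/
/-- Solving the layered-induction recursion for FirstDiff[d] with m = n: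
with `log₂ β 11 = -log₂ 11` and `log₂ β (i+1) = log₂(10/3) + k log₂ β i`,
at `i* = 11 + log_k(log₂ n)` one has
`log₂ β i* = log₂(10/3) (k^{log_k log₂ n} - 1)/(k-1) - (log₂ n) log₂ 11
  ≤ (log₂ n)(log₂(10/3) - log₂ 11) ≤ -1.7 log₂ n`. -/
theorem stmt_1 (n : ℝ) (k : ℕ) (s : ℕ) (β : ℕ → ℝ) (hn : 2 ≤ n) (hk : 2 ≤ k)
    (hs : 1 ≤ s) (hslog : ((k : ℝ)) ^ s = Real.logb 2 n)
    (hβ0 : Real.logb 2 (β 11) = - Real.logb 2 11)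
    (hβ : ∀ i, Real.logb 2 (β (i + 1)) = Real.logb 2 (10 / 3) + k * Real.logb 2 (β i)) :
    Real.logb 2 (β (11 + s))
        = Real.logb 2 (10 / 3) * (((k : ℝ) ^ s - 1) / ((k : ℝ) - 1))
          - Real.logb 2 n * Real.logb 2 11
    ∧ Real.logb 2 (10 / 3) * (((k : ℝ) ^ s - 1) / ((k : ℝ) - 1))
          - Real.logb 2 n * Real.logb 2 11
        ≤ Real.logb 2 n * (Real.logb 2 (10 / 3) - Real.logb 2 11)
    ∧ Real.logb 2 n * (Real.logb 2 (10 / 3) - Real.logb 2 11) ≤ -1.7 * Real.logb 2 n := by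
  have hk2 : (2 : ℝ) ≤ (k : ℝ) := by exact_mod_cast hk
  have hk1 : (k : ℝ) - 1 ≠ 0 := by linarith
  set L := Real.logb 2 (10 / 3) with hL
  have hL0 : 0 ≤ L := Real.logb_nonneg (by norm_num) (by norm_num)
  have hlogn0 : 0 ≤ Real.logb 2 n := Real.logb_nonneg (by norm_num) (by linarith)
  -- general formula
  have key : ∀ t : ℕ, Real.logb 2 (β (11 + t))
      = L * (((k : ℝ) ^ t - 1) / ((k : ℝ) - 1)) - (k : ℝ) ^ t * Real.logb 2 11 := by
    intro t
    induction t with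
    | zero => simp [hβ0]
    | succ t ih =>
        have : 11 + (t + 1) = (11 + t) + 1 := by ring
        rw [this, hβ, ih]
        field_simp
        ring
  refine ⟨?_, ?_, ?_⟩
  · rw [key s, hslog]
  · have hpow1 : (1 : ℝ) ≤ (k : ℝ) ^ s := one_le_pow₀ (by linarith)
    have hdiv : ((k : ℝ) ^ s - 1) / ((k : ℝ) - 1) ≤ (k : ℝ) ^ s := by
      rw [div_le_iff₀ (by linarith)]
      nlinarith
    have := mul_le_mul_of_nonneg_left hdiv hL0
    rw [hslog] at this
    nlinarith
  · have hle : L - Real.logb 2 11 ≤ -1.7 := by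
      have h1 : L - Real.logb 2 11 = Real.logb 2 ((10 / 3) / 11) := by
        rw [hL, ← Real.logb_div (by norm_num) (by norm_num)]
      rw [h1]
      have h2 : ((10 : ℝ) / 3) / 11 = 10 / 33 := by norm_num
      rw [h2]
      have h3 : Real.logb 2 ((10 : ℝ) / 33) ≤ (-1.7 : ℝ) := by
        rw [Real.logb_le_iff_le_rpow (by norm_num) (by norm_num)]
        have h4 : ((2 : ℝ) ^ ((1.7 : ℝ))) ≤ 33 / 10 := by
          have h5 : ((2 : ℝ) ^ ((1.7 : ℝ))) ^ (10 : ℕ) ≤ (33 / 10 : ℝ) ^ (10 : ℕ) := by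
            rw [← Real.rpow_natCast ((2 : ℝ) ^ (1.7 : ℝ)) 10, ← Real.rpow_mul (by norm_num)]
            have : (1.7 : ℝ) * (10 : ℕ) = ((17 : ℕ) : ℝ) := by norm_num
            rw [this, Real.rpow_natCast]
            norm_num
          exact le_of_pow_le_pow_left₀ (by norm_num) (by norm_num) h5
        have h6 : (2 : ℝ) ^ (-1.7 : ℝ) = ((2 : ℝ) ^ (1.7 : ℝ))⁻¹ := by
          rw [← Real.rpow_neg_one, ← Real.rpow_mul (by norm_num)]; norm_num
        rw [h6, le_inv_comm₀ (by norm_num) (Real.rpow_pos_of_pos (by norm_num) _)]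
        linarith
      exact h3
    nlinarith
end

section
/- Let X₁, …, X_n be independent geometric random variables with success parameters p₁, …, p_n ∈ (0,1], let p* = min_i p_i, X = ∑ X_i and μ = E[X] = ∑ 1/p_i. Then for any Λ ≥ 1, Pr(X ≥ Λμ) ≤ exp(−p*·μ·(Λ − 1 − ln Λ)). -/
open MeasureTheory Real

lemma neg_log_one_sub_le {x y : ℝ} (hx0 : 0 ≤ x) (hxy : x ≤ y) (hy0 : 0 < y) (hy1 : y < 1) :
    -Real.log (1 - x) ≤ (x / y) * (-Real.log (1 - y)) := by
  have h1y : (0:ℝ) < 1 - y := by linarith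
  have h1 : (1:ℝ) ∈ Set.Ioi (0:ℝ) := by norm_num
  have h2 : (1 - y) ∈ Set.Ioi (0:ℝ) := h1y
  have ha : 0 ≤ x / y := div_nonneg hx0 hy0.le
  have hb : 0 ≤ 1 - x / y := by
    have : x / y ≤ 1 := (div_le_one hy0).2 hxy
    linarith
  have hab : x / y + (1 - x / y) = 1 := by ring
  have hcc := strictConcaveOn_log_Ioi.concaveOn.2 h2 h1 ha hb hab
  have harg : (x / y) • (1 - y) + (1 - x / y) • (1:ℝ) = 1 - x := by
    field_simp
    rw [smul_eq_mul, smul_eq_mul, div_mul_eq_mul_div, mul_one, ← add_div, div_eq_iff hy0.ne']; ring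
  rw [harg] at hcc
  simp only [smul_eq_mul, Real.log_one, mul_zero, add_zero] at hcc
  nlinarith [hcc]

lemma geom_lintegral_bound {Ω : Type*} [MeasurableSpace Ω] (μ : Measure Ω)
    [IsProbabilityMeasure μ] (p t : ℝ) (hp0 : 0 < p) (hp1 : p ≤ 1) (ht0 : 0 ≤ t) (htp : t < p)
    (Xi : Ω → ℕ) (hm : Measurable Xi)
    (hg : ∀ j : ℕ, 1 ≤ j → (μ {ω | Xi ω = j}).toReal = (1 - p) ^ (j - 1) * p)
    (h0 : μ {ω | Xi ω = 0} = 0) :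
    ∫⁻ ω, ENNReal.ofReal (Real.exp (t * (Xi ω : ℝ))) ∂μ ≤ ENNReal.ofReal (p / (p - t)) := by
  have ht1 : t < 1 := lt_of_lt_of_le htp hp1
  set q : ℝ := 1 - p with hq
  set r : ℝ := (1 - t)⁻¹ with hr
  have h1t : (0:ℝ) < 1 - t := by linarith
  have hr0 : 0 < r := inv_pos.2 h1t
  have hq0 : 0 ≤ q := by rw [hq]; linarith
  have hqr1 : q * r < 1 := by
    rw [hr, mul_inv_lt_iff₀ h1t, hq, one_mul]; linarith
  have hqr0 : 0 ≤ q * r := mul_nonneg hq0 hr0.le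
  have her : Real.exp t ≤ r := by
    have h' : 1 - t ≤ Real.exp (-t) := by linarith [Real.add_one_le_exp (-t)]
    rw [hr]
    calc Real.exp t = (Real.exp (-t))⁻¹ := by rw [Real.exp_neg, inv_inv]
    _ ≤ (1 - t)⁻¹ := by gcongr
  have hgm : Measurable fun j : ℕ => ENNReal.ofReal (Real.exp (t * (j : ℝ))) :=
    measurable_from_top
  have hpre : ∀ j : ℕ, (μ.map Xi) {j} = μ {ω | Xi ω = j} := by
    intro j
    rw [Measure.map_apply hm (measurableSet_singleton j)]
    rfl
  calc ∫⁻ ω, ENNReal.ofReal (Real.exp (t * (Xi ω : ℝ))) ∂μ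
      = ∫⁻ j, ENNReal.ofReal (Real.exp (t * (j : ℝ))) ∂(μ.map Xi) :=
        (lintegral_map hgm hm).symm
    _ = ∑' j : ℕ, ENNReal.ofReal (Real.exp (t * (j : ℝ))) * (μ.map Xi) {j} :=
        lintegral_countable' _
    _ = ∑' k : ℕ, ENNReal.ofReal (Real.exp (t * ((k + 1 : ℕ) : ℝ)))
          * (μ.map Xi) {(k + 1 : ℕ)} := by
        rw [tsum_eq_zero_add' ENNReal.summable]
        rw [hpre 0, h0, mul_zero, zero_add]
    _ ≤ ∑' k : ℕ, ENNReal.ofReal (p * r) * (ENNReal.ofReal (q * r)) ^ k := by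
        apply ENNReal.tsum_le_tsum
        intro k
        rw [hpre (k + 1)]
        have hmeq : μ {ω | Xi ω = k + 1} = ENNReal.ofReal (q ^ k * p) := by
          rw [← ENNReal.ofReal_toReal (measure_ne_top μ {ω | Xi ω = k + 1}),
            hg (k + 1) (Nat.le_add_left 1 k), Nat.add_sub_cancel]
        rw [hmeq, ← ENNReal.ofReal_mul (Real.exp_pos _).le,
          ← ENNReal.ofReal_pow hqr0, ← ENNReal.ofReal_mul (by positivity)]
        apply ENNReal.ofReal_le_ofReal
        have hexp : Real.exp (t * ((k + 1 : ℕ) : ℝ)) ≤ r ^ (k + 1) := by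
          rw [mul_comm, Real.exp_nat_mul]
          exact pow_le_pow_left₀ (Real.exp_pos t).le her (k + 1)
        calc Real.exp (t * ((k + 1 : ℕ) : ℝ)) * (q ^ k * p)
            ≤ r ^ (k + 1) * (q ^ k * p) := by
              apply mul_le_mul_of_nonneg_right hexp (by positivity)
          _ = p * r * (q * r) ^ k := by rw [mul_pow]; ring
    _ = ENNReal.ofReal (p * r) * (1 - ENNReal.ofReal (q * r))⁻¹ := by
        rw [ENNReal.tsum_mul_left, ENNReal.tsum_geometric]
    _ = ENNReal.ofReal (p / (p - t)) := by
        rw [← ENNReal.ofReal_one, ← ENNReal.ofReal_sub _ hqr0,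
          ← ENNReal.ofReal_inv_of_pos (by linarith), ← ENNReal.ofReal_mul (by positivity)]
        congr 1
        have h2 : (1:ℝ) - q * r = (p - t) / (1 - t) := by
          rw [hq, hr]; field_simp; ring
        rw [h2, hr, eq_div_iff (by linarith : p - t ≠ 0)]
        field_simp
        rw [div_self (show p - t ≠ 0 by linarith)]


/-- Janson's tail bound for sums of independent geometric random variables
(Theorem 2.1 of Janson 2014): if `X₁, …, Xₙ` are independent geometric random
variables with parameters `p₁, …, pₙ ∈ (0,1]`, `p* = minᵢ pᵢ`, and
`μ = E[∑ Xᵢ] = ∑ 1/pᵢ`, then for every `Λ ≥ 1`,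
`Pr(∑ Xᵢ ≥ Λ μ) ≤ exp(-p* μ (Λ - 1 - ln Λ))`. -/
theorem stmt_5 {Ω : Type*} [MeasurableSpace Ω] (μ : Measure Ω) [IsProbabilityMeasure μ]
    (n : ℕ) (hn : 1 ≤ n) (p : Fin n → ℝ) (hp0 : ∀ i, 0 < p i) (hp1 : ∀ i, p i ≤ 1)
    (X : Fin n → Ω → ℕ) (hmeas : ∀ i, Measurable (X i))
    (hgeom : ∀ i, ∀ j : ℕ, 1 ≤ j →
      (μ {ω | X i ω = j}).toReal = (1 - p i) ^ (j - 1) * p i)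
    (hpos : ∀ i, (μ {ω | 1 ≤ X i ω}).toReal = 1)
    (hindep : ProbabilityTheory.iIndepFun X μ)
    (pstar M : ℝ) (hpstar_le : ∀ i, pstar ≤ p i) (hpstar_mem : ∃ i, p i = pstar)
    (hM : M = ∑ i, 1 / p i) (Λ : ℝ) (hΛ : 1 ≤ Λ) :
    (μ {ω | Λ * M ≤ (∑ i, X i ω : ℝ)}).toReal
      ≤ Real.exp (-pstar * M * (Λ - 1 - Real.log Λ)) := by
  rcases eq_or_lt_of_le hΛ with hΛ1 | hΛ1
  · subst hΛ1
    have h1 : Real.exp (-pstar * M * (1 - 1 - Real.log 1)) = 1 := by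
      simp [Real.log_one]
    rw [h1]
    calc (μ {ω | 1 * M ≤ (∑ i, X i ω : ℝ)}).toReal
        ≤ (μ Set.univ).toReal :=
          ENNReal.toReal_mono (measure_ne_top μ _) (measure_mono (Set.subset_univ _))
      _ = 1 := by simp
  · obtain ⟨i₀, hi₀⟩ := hpstar_mem
    have hps0 : 0 < pstar := hi₀ ▸ hp0 i₀
    have hps1 : pstar ≤ 1 := hi₀ ▸ hp1 i₀
    have hΛ0 : (0:ℝ) < Λ := by linarith
    have hy0 : (0:ℝ) < 1 - 1/Λ := by
      have : 1/Λ < 1 := by rw [div_lt_one hΛ0]; exact hΛ1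
      linarith
    have hy1 : (1:ℝ) - 1/Λ < 1 := by
      have : 0 < 1/Λ := by positivity
      linarith
    set t : ℝ := pstar * (1 - 1/Λ) with htdef
    have ht0' : 0 < t := mul_pos hps0 hy0
    have ht0 : 0 ≤ t := ht0'.le
    have htps : t < pstar := by nlinarith
    have htp : ∀ i, t < p i := fun i => lt_of_lt_of_le htps (hpstar_le i)
    -- zero mass at 0
    have h0 : ∀ i, μ {ω | X i ω = 0} = 0 := by
      intro i
      have hms : MeasurableSet {ω | 1 ≤ X i ω} :=
        hmeas i MeasurableSpace.measurableSet_top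
      have h1 : μ {ω | 1 ≤ X i ω} = 1 := by
        have hle : μ {ω | 1 ≤ X i ω} ≤ 1 := prob_le_one
        have h2 := hpos i
        rcases lt_or_eq_of_le hle with h | h
        · exfalso
          have : (μ {ω | 1 ≤ X i ω}).toReal < 1 := by
            rw [← ENNReal.toReal_one]
            exact ENNReal.toReal_strict_mono ENNReal.one_ne_top h
          rw [h2] at this
          exact lt_irrefl _ this
        · exact h
      have hcomp : {ω | X i ω = 0} = {ω | 1 ≤ X i ω}ᶜ := by
        ext ω
        simp only [Set.mem_setOf_eq, Set.mem_compl_iff]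
        omega
      rw [hcomp, measure_compl hms (measure_ne_top μ _), measure_univ, h1, tsub_self]
    -- per-index lintegral bound
    have hLi : ∀ i, ∫⁻ ω, ENNReal.ofReal (Real.exp (t * (X i ω : ℝ))) ∂μ
        ≤ ENNReal.ofReal (p i / (p i - t)) := fun i =>
      geom_lintegral_bound μ (p i) t (hp0 i) (hp1 i) ht0 (htp i) (X i) (hmeas i)
        (hgeom i) (h0 i)
    have hcast : ∀ i, Measurable fun ω => ((X i ω : ℝ)) :=
      fun i => measurable_from_top.comp (hmeas i)
    have hsm : ∀ i, Measurable fun ω => Real.exp (t * (X i ω : ℝ)) :=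
      fun i => Real.measurable_exp.comp ((measurable_const.mul (hcast i)))
    have hint : ∀ i, Integrable (fun ω => Real.exp (t * (X i ω : ℝ))) μ := by
      intro i
      refine ⟨(hsm i).aestronglyMeasurable, ?_⟩
      rw [hasFiniteIntegral_iff_ofReal (ae_of_all _ fun ω => (Real.exp_pos _).le)]
      exact lt_of_le_of_lt (hLi i) ENNReal.ofReal_lt_top
    set Y : Fin n → Ω → ℝ := fun i ω => (X i ω : ℝ) with hY
    have hYindep : ProbabilityTheory.iIndepFun Y μ :=
      hindep.comp (fun _ => ((↑·) : ℕ → ℝ)) (fun _ => measurable_from_top)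
    have hYmeas : ∀ i, Measurable (Y i) := hcast
    have hintsum : Integrable (fun ω => Real.exp (t * (∑ i, Y i) ω)) μ :=
      ProbabilityTheory.iIndepFun.integrable_exp_mul_sum hYindep hYmeas
        (fun i _ => hint i)
    have hch := ProbabilityTheory.measure_ge_le_exp_mul_mgf (X := ∑ i, Y i) (μ := μ)
      (Λ * M) ht0 hintsum
    have hset : {ω | Λ * M ≤ (∑ i, X i ω : ℝ)} = {ω | Λ * M ≤ (∑ i, Y i) ω} := by
      ext ω
      simp only [Set.mem_setOf_eq, Finset.sum_apply, hY]
    have hmgf : ∀ i, ProbabilityTheory.mgf (Y i) μ t ≤ p i / (p i - t) := by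
      intro i
      rw [ProbabilityTheory.mgf,
        integral_eq_lintegral_of_nonneg_ae (ae_of_all _ fun ω => (Real.exp_pos _).le)
          (hsm i).aestronglyMeasurable]
      calc (∫⁻ ω, ENNReal.ofReal (Real.exp (t * (X i ω : ℝ))) ∂μ).toReal
          ≤ (ENNReal.ofReal (p i / (p i - t))).toReal :=
            ENNReal.toReal_mono ENNReal.ofReal_ne_top (hLi i)
        _ = p i / (p i - t) := ENNReal.toReal_ofReal
            (div_nonneg (hp0 i).le (sub_pos.2 (htp i)).le)
    have hprod : ProbabilityTheory.mgf (∑ i, Y i) μ t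
        = ∏ i, ProbabilityTheory.mgf (Y i) μ t :=
      hYindep.mgf_sum hYmeas Finset.univ
    have hbound : ∀ i, p i / (p i - t) ≤ Real.exp (pstar / p i * Real.log Λ) := by
      intro i
      have hpi := hp0 i
      have hti := htp i
      have hx0 : 0 ≤ t / p i := div_nonneg ht0 hpi.le
      have hxy : t / p i ≤ t / pstar := by gcongr; exact hpstar_le i
      have hy : t / pstar = 1 - 1/Λ := by
        rw [htdef, mul_comm, mul_div_assoc, div_self hps0.ne', mul_one]
      have hy0' : 0 < t / pstar := div_pos ht0' hps0
      have hy1' : t / pstar < 1 := (div_lt_one hps0).2 htps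
      have hkey := neg_log_one_sub_le hx0 hxy hy0' hy1'
      have h1x : (1:ℝ) - t / p i = (p i - t) / p i := by field_simp
      have hlog1 : -Real.log (1 - t / p i) = Real.log (p i / (p i - t)) := by
        rw [h1x, ← Real.log_inv, inv_div]
      have hlog2 : -Real.log (1 - t / pstar) = Real.log Λ := by
        rw [hy]
        have h : (1:ℝ) - (1 - 1/Λ) = 1/Λ := by ring
        rw [h, one_div, Real.log_inv, neg_neg]
      have hxy2 : (t / p i) / (t / pstar) = pstar / p i := by
        field_simp
      rw [hlog1, hxy2, hlog2] at hkey
      calc p i / (p i - t)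
          = Real.exp (Real.log (p i / (p i - t))) :=
            (Real.exp_log (div_pos hpi (sub_pos.2 hti))).symm
        _ ≤ Real.exp (pstar / p i * Real.log Λ) := Real.exp_le_exp.2 hkey
    have hsum : ∑ i, pstar / p i * Real.log Λ = pstar * M * Real.log Λ := by
      rw [hM, Finset.mul_sum, Finset.sum_mul]
      exact Finset.sum_congr rfl fun i _ => by ring
    calc (μ {ω | Λ * M ≤ (∑ i, X i ω : ℝ)}).toReal
        = (μ {ω | Λ * M ≤ (∑ i, Y i) ω}).toReal := by rw [hset]
      _ ≤ Real.exp (-t * (Λ * M)) * ProbabilityTheory.mgf (∑ i, Y i) μ t := hch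
      _ ≤ Real.exp (-t * (Λ * M)) * ∏ i, (p i / (p i - t)) := by
          rw [hprod]
          apply mul_le_mul_of_nonneg_left _ (Real.exp_pos _).le
          exact Finset.prod_le_prod (fun i _ => ProbabilityTheory.mgf_nonneg)
            (fun i _ => hmgf i)
      _ ≤ Real.exp (-t * (Λ * M)) * ∏ i, Real.exp (pstar / p i * Real.log Λ) := by
          apply mul_le_mul_of_nonneg_left _ (Real.exp_pos _).le
          exact Finset.prod_le_prod
            (fun i _ => div_nonneg (hp0 i).le (sub_pos.2 (htp i)).le)
            (fun i _ => hbound i)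
      _ = Real.exp (-t * (Λ * M) + pstar * M * Real.log Λ) := by
          rw [← Real.exp_sum, ← Real.exp_add, hsum]
      _ = Real.exp (-pstar * M * (Λ - 1 - Real.log Λ)) := by
          congr 1
          rw [htdef]
          field_simp
          ring
end

section
/- If an allocation algorithm ALG places each of m balls using at most k independent uniform probes and any placement rule, then under the coupling in which Greedy[k]'s k probes extend ALG's probes, the load vector of Greedy[k] is majorized by that of ALG at every time step 0 ≤ t ≤ m. Core single-step lemma: if load vector u is majorized by v, and u is updated by adding a ball to its least loaded probed bin among k probes while v is updated by adding a ball to a probed bin (from the first w ≤ k of the same probes) of load at least the load of the bin chosen for u, then the updated u is still majorized by the updated v. -/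
/-- `Majorizes v u` : after sorting in non-increasing order, every prefix sum of `v`
dominates the corresponding prefix sum of `u`, with equal total sums. -/
def Majorizes {n : ℕ} (v u : Fin n → ℕ) : Prop :=
  (∑ i, v i = ∑ i, u i) ∧
    ∀ s : Finset (Fin n), ∃ t : Finset (Fin n),
      t.card = s.card ∧ ∑ i ∈ s, u i ≤ ∑ i ∈ t, v i

private lemma sum_update_add_one' {n : ℕ} (f : Fin n → ℕ) (x : Fin n)
    {s : Finset (Fin n)} (h : x ∈ s) :
    ∑ i ∈ s, Function.update f x (f x + 1) i = (∑ i ∈ s, f i) + 1 := by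
  rw [Finset.sum_update_of_mem h, Finset.sdiff_singleton_eq_erase, add_right_comm,
    Finset.add_sum_erase _ f h]

private lemma sum_update_add_one {n : ℕ} (f : Fin n → ℕ) (x : Fin n) :
    ∑ i, Function.update f x (f x + 1) i = (∑ i, f i) + 1 :=
  sum_update_add_one' f x (Finset.mem_univ x)

private lemma sum_le_sum_update {n : ℕ} (f : Fin n → ℕ) (x : Fin n) (t : Finset (Fin n)) :
    ∑ i ∈ t, f i ≤ ∑ i ∈ t, Function.update f x (f x + 1) i := by
  refine Finset.sum_le_sum fun i _ => ?_
  rcases eq_or_ne i x with rfl | h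
  · simp
  · simp [Function.update_of_ne h]

/-- Core single-step lemma for the lower bound (Greedy[k] is majorized by any
algorithm ALG using at most `k` independent uniform probes, under the coupling in
which Greedy[k]'s `k` probes extend ALG's `w ≤ k` probes): if the load vector `u`
(Greedy) is majorized by `v` (ALG), `u` receives a ball in its least loaded probed
bin among the `k` probes, and `v` receives a ball in one of the first `w` probed
bins whose load is at least the load of the bin chosen for `u`, then the updated
`u` is still majorized by the updated `v`. -/
theorem stmt_18 {n k : ℕ} (hk : 0 < k) (u v : Fin n → ℕ) (probes : Fin k → Fin n)
    (w : ℕ) (hw : w ≤ k) (hmaj : Majorizes v u)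
    (ig : Fin k) (hgreedy : ∀ j : Fin k, u (probes ig) ≤ u (probes j))
    (ja : Fin k) (hja : (ja : ℕ) < w) (hload : u (probes ig) ≤ v (probes ja)) :
    Majorizes (Function.update v (probes ja) (v (probes ja) + 1))
      (Function.update u (probes ig) (u (probes ig) + 1)) := by
  obtain ⟨hsum, hpre⟩ := hmaj
  set a := probes ig with ha_def
  set b := probes ja with hb_def
  constructor
  · rw [sum_update_add_one, sum_update_add_one, hsum]
  intro s
  by_cases ha : a ∈ s
  · -- the updated sum over s is (∑ s u) + 1
    have hsu : ∑ i ∈ s, Function.update u a (u a + 1) i = (∑ i ∈ s, u i) + 1 :=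
      sum_update_add_one' u a ha
    have hsplit : u a + ∑ i ∈ s.erase a, u i = ∑ i ∈ s, u i := Finset.add_sum_erase _ u ha
    have hc1 : s.card - 1 ≤ n := by
      have := Finset.card_le_card (Finset.subset_univ s)
      simp only [Finset.card_univ, Fintype.card_fin] at this
      omega
    -- maximal set of size s.card - 1
    obtain ⟨T₀, _, hT₀card⟩ := Finset.exists_subset_card_eq
      (s := (Finset.univ : Finset (Fin n))) (n := s.card - 1) (by simpa using hc1)
    have hne : (Finset.univ.powersetCard (s.card - 1)).Nonempty :=
      ⟨T₀, Finset.mem_powersetCard.2 ⟨Finset.subset_univ _, hT₀card⟩⟩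
    obtain ⟨T₁, hT₁mem, hT₁max⟩ := Finset.exists_max_image
      (Finset.univ.powersetCard (s.card - 1)) (fun t => ∑ i ∈ t, v i) hne
    have hT₁card : T₁.card = s.card - 1 := (Finset.mem_powersetCard.1 hT₁mem).2
    -- from majorization on s.erase a
    obtain ⟨t₀, ht₀card, ht₀le⟩ := hpre (s.erase a)
    have ht₀card' : t₀.card = s.card - 1 := by rw [ht₀card, Finset.card_erase_of_mem ha]
    have h1 : ∑ i ∈ s.erase a, u i ≤ ∑ i ∈ T₁, v i :=
      ht₀le.trans (hT₁max t₀ (Finset.mem_powersetCard.2 ⟨Finset.subset_univ _, ht₀card'⟩))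
    have hscard : 1 ≤ s.card := Finset.card_pos.2 ⟨a, ha⟩
    by_cases hb : b ∈ T₁
    · -- find a maximal size-card set containing b
      obtain ⟨T₂, hT₂card, hT₂le⟩ := hpre s
      have hlt : T₁.card < T₂.card := by omega
      obtain ⟨x, hxT₂, hxT₁⟩ : ∃ x ∈ T₂, x ∉ T₁ := by
        by_contra h
        push_neg at h
        exact absurd (Finset.card_le_card h) (by omega)
      refine ⟨insert x T₁, ?_, ?_⟩
      · rw [Finset.card_insert_of_notMem hxT₁, hT₁card]; omega
      · have hbin : b ∈ insert x T₁ := Finset.mem_insert_of_mem hb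
        have hkey : ∑ i ∈ T₂, v i ≤ ∑ i ∈ insert x T₁, v i := by
          rw [Finset.sum_insert hxT₁]
          have : ∑ i ∈ T₂.erase x, v i ≤ ∑ i ∈ T₁, v i :=
            hT₁max _ (Finset.mem_powersetCard.2 ⟨Finset.subset_univ _,
              by rw [Finset.card_erase_of_mem hxT₂]; omega⟩)
          have := Finset.add_sum_erase _ v hxT₂
          omega
        have hfin : ∑ i ∈ insert x T₁, Function.update v b (v b + 1) i
            = (∑ i ∈ insert x T₁, v i) + 1 := sum_update_add_one' v b hbin
        rw [hsu, hfin]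
        omega
    · refine ⟨insert b T₁, ?_, ?_⟩
      · rw [Finset.card_insert_of_notMem hb, hT₁card]; omega
      · have hfin : ∑ i ∈ insert b T₁, Function.update v b (v b + 1) i
            = (v b + 1) + ∑ i ∈ T₁, v i := by
          rw [sum_update_add_one' v b (Finset.mem_insert_self b T₁),
            Finset.sum_insert hb]
          omega
        rw [hsu, hfin]
        omega
  · obtain ⟨t, htcard, htle⟩ := hpre s
    refine ⟨t, htcard, ?_⟩
    have : ∑ i ∈ s, Function.update u a (u a + 1) i = ∑ i ∈ s, u i :=
      Finset.sum_congr rfl fun i hi => Function.update_of_ne (fun h : i = a => ha (h ▸ hi)) _ _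
    rw [this]
    exact htle.trans (sum_le_sum_update v b t)
end
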